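/- Let Ω = {x ∈ ℝ³ : |x| > 1} and 3 < p < ∞. For each natural number m ≥ 1, let g_m be the indicator function of the interval (m, 2m], define v_m(t,r) = (4πt)^{−1/2} ∫₀^∞ k(t,r,s) g_m(s) ds, define u_m(t,x) = |x|^{−1} v_m(t, |x| − 1) for x ∈ Ω, and let f_m(x) = |x|^{−1} for m + 1 < |x| ≤ 2m + 1 and f_m(x) = 0 otherwise. Then there exist C > 0 and M ≥ 1 such that for every natural number m ≥ M, ‖∇ₓ u_m(m², ·)‖_{L^p(Ω)} ≥ C m^{−3/p} ‖f_m‖_{L^p(Ω)}; in particular the decay rate t^{−3/(2p)} in the gradient estimate for the Dirichlet heat flow on Ω is optimal for 3 < p < ∞ along the times t_m = m². -/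

import Mathlib

open MeasureTheory ENNReal Filter

/-- `k(t,r,s) = exp(-(r-s)²/(4t)) - exp(-(r+s)²/(4t))`,
the (unnormalized) Dirichlet heat kernel of the half-line. -/
noncomputable def halfLineKernel (t r s : ℝ) : ℝ :=
  Real.exp (-(r - s) ^ 2 / (4 * t)) - Real.exp (-(r + s) ^ 2 / (4 * t))

/-- `g_m`, the indicator function of the interval `(m, 2m]`. -/
noncomputable def gIndicator (m : ℕ) (s : ℝ) : ℝ :=
  if s ∈ Set.Ioc (m : ℝ) (2 * m) then 1 else 0

/-- `v_m(t,r) = (4πt)^{-1/2} ∫₀^∞ k(t,r,s) g_m(s) ds`. -/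
noncomputable def vRad (m : ℕ) (t r : ℝ) : ℝ :=
  (4 * Real.pi * t) ^ (-(1 : ℝ) / 2) *
    ∫ s in Set.Ioi (0 : ℝ), halfLineKernel t r s * gIndicator m s

/-- `u_m(t,x) = |x|⁻¹ v_m(t, |x| - 1)`, the radial solution of the Dirichlet heat
equation on the exterior of the unit ball in `ℝ³`. -/
noncomputable def uRad (m : ℕ) (t : ℝ) (x : EuclideanSpace ℝ (Fin 3)) : ℝ :=
  ‖x‖⁻¹ * vRad m t (‖x‖ - 1)

/-- The radial initial data `f_m(x) = |x|⁻¹` for `m + 1 < |x| ≤ 2m + 1`, `0` otherwise. -/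
noncomputable def fData (m : ℕ) (x : EuclideanSpace ℝ (Fin 3)) : ℝ :=
  if (m : ℝ) + 1 < ‖x‖ ∧ ‖x‖ ≤ 2 * m + 1 then ‖x‖⁻¹ else 0

/-- The exterior of the closed unit ball in `ℝ³`. -/
def extBall : Set (EuclideanSpace ℝ (Fin 3)) := {x | 1 < ‖x‖}

/-- derivative of the kernel in `r` (also the `s`-derivative of `Ganti`). -/
noncomputable def kr (t r s : ℝ) : ℝ :=
  Real.exp (-(r - s) ^ 2 / (4 * t)) * (-(2 * (r - s)) / (4 * t))
    - Real.exp (-(r + s) ^ 2 / (4 * t)) * (-(2 * (r + s)) / (4 * t))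

/-- antiderivative of `kr` in `s`. -/
noncomputable def Ganti (t r s : ℝ) : ℝ :=
  -Real.exp (-(r - s) ^ 2 / (4 * t)) - Real.exp (-(r + s) ^ 2 / (4 * t))

noncomputable def cSmall : ℝ := (Real.exp (-(1:ℝ)/4) - Real.exp (-1))/16

lemma hasDerivAt_k_r (t s r : ℝ) :
    HasDerivAt (fun r => halfLineKernel t r s) (kr t r s) r := by
  have h1 : HasDerivAt (fun r : ℝ => -(r - s) ^ 2 / (4 * t))
      (-(2 * (r - s)) / (4 * t)) r := by
    have : HasDerivAt (fun r : ℝ => r - s) 1 r := (hasDerivAt_id r).sub_const s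
    have := this.pow 2
    have := this.neg.div_const (4 * t)
    refine this.congr_deriv ?_
    ring
  have h2 : HasDerivAt (fun r : ℝ => -(r + s) ^ 2 / (4 * t))
      (-(2 * (r + s)) / (4 * t)) r := by
    have : HasDerivAt (fun r : ℝ => r + s) 1 r := (hasDerivAt_id r).add_const s
    have := this.pow 2
    have := this.neg.div_const (4 * t)
    refine this.congr_deriv ?_
    ring
  exact (h1.exp).sub (h2.exp)

lemma hasDerivAt_Ganti_s (t r s : ℝ) :
    HasDerivAt (fun s => Ganti t r s) (kr t r s) s := by
  have h1 : HasDerivAt (fun s : ℝ => -(r - s) ^ 2 / (4 * t))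
      ((2 * (r - s)) / (4 * t)) s := by
    have : HasDerivAt (fun s : ℝ => r - s) (-1) s := by
      simpa using (hasDerivAt_id s).const_sub r
    have := ((this.pow 2).neg).div_const (4 * t)
    refine this.congr_deriv ?_
    ring
  have h2 : HasDerivAt (fun s : ℝ => -(r + s) ^ 2 / (4 * t))
      (-(2 * (r + s)) / (4 * t)) s := by
    have : HasDerivAt (fun s : ℝ => r + s) 1 s := by
      simpa using (hasDerivAt_id s).const_add r
    have := ((this.pow 2).neg).div_const (4 * t)
    refine this.congr_deriv ?_
    ring
  have := (h1.exp.neg).sub h2.exp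
  refine this.congr_deriv ?_
  unfold kr
  ring

/-- bound on `kr`. -/
lemma kr_abs_le {t : ℝ} (ht : 0 < t) (r s : ℝ) :
    |kr t r s| ≤ (|r| + |s|) / t := by
  have e1 : Real.exp (-(r - s) ^ 2 / (4 * t)) ≤ 1 := by
    rw [Real.exp_le_one_iff]
    exact div_nonpos_of_nonpos_of_nonneg (neg_nonpos.mpr (sq_nonneg _)) (by positivity)
  have e2 : Real.exp (-(r + s) ^ 2 / (4 * t)) ≤ 1 := by
    rw [Real.exp_le_one_iff]
    exact div_nonpos_of_nonpos_of_nonneg (neg_nonpos.mpr (sq_nonneg _)) (by positivity)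
  have p1 : (0:ℝ) < Real.exp (-(r - s) ^ 2 / (4 * t)) := Real.exp_pos _
  have p2 : (0:ℝ) < Real.exp (-(r + s) ^ 2 / (4 * t)) := Real.exp_pos _
  have : |kr t r s| ≤ |Real.exp (-(r - s) ^ 2 / (4 * t)) * (-(2 * (r - s)) / (4 * t))|
      + |Real.exp (-(r + s) ^ 2 / (4 * t)) * (-(2 * (r + s)) / (4 * t))| := abs_sub _ _
  refine this.trans ?_
  rw [abs_mul, abs_mul]
  have b1 : |Real.exp (-(r - s) ^ 2 / (4 * t))| * |(-(2 * (r - s)) / (4 * t))|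
      ≤ 1 * (|r - s| / (2*t)) := by
    apply mul_le_mul
    · rwa [abs_of_pos p1]
    · rw [abs_div, abs_neg]
      rw [abs_of_pos (by positivity : (0:ℝ) < 4*t)]
      rw [abs_mul, abs_two]
      rw [div_le_div_iff₀ (by positivity) (by positivity)]
      ring_nf
      nlinarith [abs_nonneg (r - s)]
    · positivity
    · norm_num
  have b2 : |Real.exp (-(r + s) ^ 2 / (4 * t))| * |(-(2 * (r + s)) / (4 * t))|
      ≤ 1 * (|r + s| / (2*t)) := by
    apply mul_le_mul
    · rwa [abs_of_pos p2]
    · rw [abs_div, abs_neg]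
      rw [abs_of_pos (by positivity : (0:ℝ) < 4*t)]
      rw [abs_mul, abs_two]
      rw [div_le_div_iff₀ (by positivity) (by positivity)]
      ring_nf
      nlinarith [abs_nonneg (r + s)]
    · positivity
    · norm_num
  have habs : |r - s| ≤ |r| + |s| := abs_sub _ _
  have habs2 : |r + s| ≤ |r| + |s| := abs_add_le _ _
  calc _ ≤ 1 * (|r - s| / (2*t)) + 1 * (|r + s| / (2*t)) := add_le_add b1 b2
    _ ≤ (|r| + |s|) / t := by
        rw [one_mul, one_mul, ← add_div, div_le_div_iff₀ (by positivity) ht]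
        nlinarith [habs, habs2, ht.le]

lemma exp_arg_le {t : ℝ} (ht : 0 < t) {r s : ℝ} (hr : 0 ≤ r) (hs : 0 ≤ s) :
    -(r + s) ^ 2 / (4 * t) ≤ -(r - s) ^ 2 / (4 * t) := by
  have h4t : (0:ℝ) < 4 * t := by positivity
  rw [div_le_div_iff_of_pos_right h4t]
  nlinarith

lemma k_nonneg {t : ℝ} (ht : 0 < t) {r s : ℝ} (hr : 0 ≤ r) (hs : 0 ≤ s) :
    0 ≤ halfLineKernel t r s := by
  unfold halfLineKernel
  have := Real.exp_le_exp.mpr (exp_arg_le ht hr hs)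
  linarith

lemma k_le {t : ℝ} (ht : 0 < t) {r s : ℝ} (hr : 0 ≤ r) (hs : 0 ≤ s) :
    halfLineKernel t r s ≤ r * s / t := by
  unfold halfLineKernel
  set a := -(r - s) ^ 2 / (4 * t) with ha
  set b := -(r + s) ^ 2 / (4 * t) with hb
  have hab : b ≤ a := exp_arg_le ht hr hs
  have ha0 : a ≤ 0 := div_nonpos_of_nonpos_of_nonneg (neg_nonpos.mpr (sq_nonneg _)) (by positivity)
  have key : Real.exp a - Real.exp b ≤ a - b := by
    have h1 : Real.exp a ≤ 1 := Real.exp_le_one_iff.mpr ha0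
    have h2 : Real.exp a - Real.exp b = Real.exp a * (1 - Real.exp (b - a)) := by
      rw [mul_sub, mul_one, ← Real.exp_add]; ring_nf
    have h3 : (b - a) + 1 ≤ Real.exp (b - a) := Real.add_one_le_exp _
    have h4 : 1 - Real.exp (b - a) ≤ a - b := by linarith
    rw [h2]
    rcases le_or_gt 0 (1 - Real.exp (b-a)) with h5 | h5
    · nlinarith [Real.exp_pos a]
    · nlinarith [Real.exp_pos a]
  have hd : a - b = r * s / t := by
    rw [ha, hb]
    field_simp
    ring
  linarith [key, hd.le, hd.ge]

lemma continuous_k_s (t r : ℝ) : Continuous fun s => halfLineKernel t r s := by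
  unfold halfLineKernel
  fun_prop

lemma continuous_kr_s (t r : ℝ) : Continuous fun s => kr t r s := by
  unfold kr
  fun_prop

lemma hasDerivAt_vInt {t : ℝ} (ht : 0 < t) (m : ℕ) (r₀ : ℝ) :
    HasDerivAt (fun r => ∫ s in Set.Ioc (m:ℝ) (2*m), halfLineKernel t r s)
      (Ganti t r₀ (2*m) - Ganti t r₀ m) r₀ := by
  have hle : (m:ℝ) ≤ 2*m := by have := Nat.cast_nonneg (α := ℝ) m; linarith
  have key := hasDerivAt_integral_of_dominated_loc_of_deriv_le
    (μ := volume.restrict (Set.Ioc (m:ℝ) (2*m)))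
    (F := fun r s => halfLineKernel t r s) (F' := fun r s => kr t r s)
    (x₀ := r₀) (bound := fun s => (|r₀| + 1 + |s|) / t)
    (Metric.ball_mem_nhds r₀ one_pos)
    (Eventually.of_forall fun r => (continuous_k_s t r).aestronglyMeasurable)
    (((continuous_k_s t r₀).integrableOn_Ioc))
    ((continuous_kr_s t r₀).aestronglyMeasurable)
    (Eventually.of_forall fun s => fun r hr => ?_)
    (((by fun_prop : Continuous fun s : ℝ => (|r₀| + 1 + |s|) / t)).integrableOn_Ioc)
    (Eventually.of_forall fun s => fun r _ => hasDerivAt_k_r t s r)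
  · have heq : ∫ s in Set.Ioc (m:ℝ) (2*m), kr t r₀ s = Ganti t r₀ (2*m) - Ganti t r₀ m := by
      rw [← intervalIntegral.integral_of_le hle]
      exact intervalIntegral.integral_eq_sub_of_hasDerivAt
        (fun s _ => hasDerivAt_Ganti_s t r₀ s)
        ((continuous_kr_s t r₀).intervalIntegrable _ _)
    rw [← heq]
    exact key.2
  · rw [Real.norm_eq_abs]
    refine (kr_abs_le ht r s).trans ?_
    have : |r| ≤ |r₀| + 1 := by
      have := mem_ball_iff_norm.mp hr
      rw [Real.norm_eq_abs] at this
      calc |r| = |r₀ + (r - r₀)| := by ring_nf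
        _ ≤ |r₀| + |r - r₀| := abs_add_le _ _
        _ ≤ |r₀| + 1 := by linarith
    rw [div_le_div_iff_of_pos_right ht]; linarith

lemma vRad_eq {m : ℕ} (hm : 1 ≤ m) (t r : ℝ) :
    vRad m t r = (4 * Real.pi * t) ^ (-(1 : ℝ) / 2) *
      ∫ s in Set.Ioc (m:ℝ) (2*m), halfLineKernel t r s := by
  unfold vRad
  congr 1
  have h1 : (fun s => halfLineKernel t r s * gIndicator m s)
      = Set.indicator (Set.Ioc (m:ℝ) (2*m)) (fun s => halfLineKernel t r s) := by
    funext s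
    unfold gIndicator
    by_cases h : s ∈ Set.Ioc (m:ℝ) (2*m) <;> simp [h]
  rw [h1, setIntegral_indicator measurableSet_Ioc]
  have hsub : Set.Ioc (m:ℝ) (2*m) ⊆ Set.Ioi (0:ℝ) := by
    intro s hs
    have h1m : (1:ℝ) ≤ m := by exact_mod_cast hm
    exact Set.mem_Ioi.mpr (lt_of_lt_of_le (by linarith : (0:ℝ) < m) hs.1.le)
  rw [Set.inter_eq_right.mpr hsub]

lemma ct_bounds {m : ℕ} (hm : 1 ≤ m) :
    1/(4*(m:ℝ)) ≤ (4 * Real.pi * (m:ℝ)^2) ^ (-(1 : ℝ) / 2) ∧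
    (4 * Real.pi * (m:ℝ)^2) ^ (-(1 : ℝ) / 2) ≤ 1/(3*(m:ℝ)) := by
  have hmpos : (0:ℝ) < m := by exact_mod_cast Nat.pos_of_ne_zero (by omega)
  have hx : (0:ℝ) < 4 * Real.pi * (m:ℝ)^2 := by positivity
  have heq : (4 * Real.pi * (m:ℝ)^2) ^ (-(1 : ℝ) / 2)
      = (Real.sqrt (4 * Real.pi * (m:ℝ)^2))⁻¹ := by
    rw [neg_div, Real.rpow_neg hx.le, Real.sqrt_eq_rpow]
  rw [heq]
  have hlow : 3*(m:ℝ) ≤ Real.sqrt (4 * Real.pi * (m:ℝ)^2) := by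
    have h9 : (3*(m:ℝ))^2 ≤ 4 * Real.pi * (m:ℝ)^2 := by
      nlinarith [Real.pi_gt_three]
    calc 3*(m:ℝ) = Real.sqrt ((3*(m:ℝ))^2) := (Real.sqrt_sq (by positivity)).symm
      _ ≤ _ := Real.sqrt_le_sqrt h9
  have hhigh : Real.sqrt (4 * Real.pi * (m:ℝ)^2) ≤ 4*(m:ℝ) := by
    have h16 : 4 * Real.pi * (m:ℝ)^2 ≤ (4*(m:ℝ))^2 := by
      nlinarith [Real.pi_le_four]
    calc Real.sqrt (4 * Real.pi * (m:ℝ)^2) ≤ Real.sqrt ((4*(m:ℝ))^2) := Real.sqrt_le_sqrt h16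
      _ = 4*(m:ℝ) := Real.sqrt_sq (by positivity)
  constructor
  · rw [one_div]
    exact inv_anti₀ (by positivity) hhigh
  · rw [one_div]
    exact inv_anti₀ (by positivity) hlow

lemma vInt_bounds {t : ℝ} (ht : 0 < t) {m : ℕ} (hm : 1 ≤ m) {r : ℝ} (hr : 0 ≤ r) :
    0 ≤ (∫ s in Set.Ioc (m:ℝ) (2*m), halfLineKernel t r s) ∧
    (∫ s in Set.Ioc (m:ℝ) (2*m), halfLineKernel t r s) ≤ 2*(m:ℝ)^2*r/t := by
  have hmpos : (0:ℝ) < m := by exact_mod_cast Nat.pos_of_ne_zero (by omega)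
  constructor
  · apply setIntegral_nonneg measurableSet_Ioc
    intro s hs
    exact k_nonneg ht hr (le_of_lt (lt_of_le_of_lt hmpos.le hs.1))
  · have hb : ∀ s ∈ Set.Ioc (m:ℝ) (2*m), halfLineKernel t r s ≤ r * (2*m) / t := by
      intro s hs
      refine (k_le ht hr (le_of_lt (lt_of_le_of_lt hmpos.le hs.1))).trans ?_
      have : s ≤ 2*m := hs.2
      rw [div_le_div_iff_of_pos_right ht]
      nlinarith
    calc (∫ s in Set.Ioc (m:ℝ) (2*m), halfLineKernel t r s)
        ≤ ∫ _ in Set.Ioc (m:ℝ) (2*m), r * (2*(m:ℝ)) / t := by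
          apply setIntegral_mono_on ((continuous_k_s t r).integrableOn_Ioc)
            (integrableOn_const (by simp [Real.volume_Ioc]))
            measurableSet_Ioc hb
      _ = (volume (Set.Ioc (m:ℝ) (2*m))).toReal • (r * (2*(m:ℝ)) / t) := setIntegral_const _
      _ = 2*(m:ℝ)^2*r/t := by
          rw [Real.volume_Ioc, ENNReal.toReal_ofReal (by linarith)]
          simp [smul_eq_mul]
          ring

lemma D_lower {m : ℕ} (hm : 2 ≤ m) {r : ℝ} (hr0 : 0 ≤ r) (hr1 : r ≤ 1) :
    Real.exp (-(1:ℝ)/4) - Real.exp (-1)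
      ≤ Ganti ((m:ℝ)^2) r (2*m) - Ganti ((m:ℝ)^2) r m := by
  have hm2 : (2:ℝ) ≤ m := by exact_mod_cast hm
  have hmpos : (0:ℝ) < m := by linarith
  have ht : (0:ℝ) < 4 * (m:ℝ)^2 := by positivity
  have A1 : Real.exp (-(1:ℝ)/4) ≤ Real.exp (-(r - m)^2 / (4 * (m:ℝ)^2)) := by
    apply Real.exp_le_exp.mpr
    rw [div_le_div_iff₀ (by norm_num : (0:ℝ) < 4) ht]
    nlinarith
  have A2 : Real.exp (-(r - 2*(m:ℝ))^2 / (4 * (m:ℝ)^2)) ≤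
      Real.exp (-(r + m)^2 / (4 * (m:ℝ)^2)) := by
    apply Real.exp_le_exp.mpr
    rw [div_le_div_iff_of_pos_right ht]
    nlinarith
  have A3 : Real.exp (-(r + 2*(m:ℝ))^2 / (4 * (m:ℝ)^2)) ≤ Real.exp (-1) := by
    apply Real.exp_le_exp.mpr
    rw [div_le_iff₀ ht]
    nlinarith
  unfold Ganti
  have : -(r - 2*(m:ℝ))^2 / (4 * (m:ℝ)^2) = -(r - 2*(m:ℝ))^2 / (4 * ((m:ℝ)^2)) := by ring_nf
  linarith [A1, A2, A3]

variable {E : Type*} [NormedAddCommGroup E] [InnerProductSpace ℝ E]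

lemma hasFDerivAt_norm' {x : E} (hx : x ≠ 0) :
    HasFDerivAt (fun y : E => ‖y‖) (‖x‖⁻¹ • innerSL ℝ x) x := by
  have hsq : HasFDerivAt (fun y : E => ‖y‖ ^ 2) (2 • innerSL ℝ x) x :=
    (hasStrictFDerivAt_norm_sq x).hasFDerivAt
  have hnx : (0:ℝ) < ‖x‖ := norm_pos_iff.mpr hx
  have hsqrt : HasDerivAt Real.sqrt (1 / (2 * Real.sqrt (‖x‖^2))) (‖x‖^2) := by
    apply Real.hasDerivAt_sqrt
    positivity
  have hcomp := hsqrt.comp_hasFDerivAt x hsq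
  have hfun : (Real.sqrt ∘ fun y : E => ‖y‖ ^ 2) = fun y : E => ‖y‖ := by
    funext y
    simp [Function.comp, Real.sqrt_sq (norm_nonneg y)]
  rw [hfun] at hcomp
  refine hcomp.congr_fderiv ?_
  rw [Real.sqrt_sq hnx.le]
  ext y
  simp [smul_smul]
  field_simp

lemma norm_gradient_uRad {m : ℕ} {t : ℝ} {x : EuclideanSpace ℝ (Fin 3)} (hx : 1 < ‖x‖)
    {vr : ℝ} (hvr : HasDerivAt (fun r => vRad m t r) vr (‖x‖ - 1)) :
    ‖gradient (uRad m t) x‖ = |(-(‖x‖^2)⁻¹ * vRad m t (‖x‖-1) + ‖x‖⁻¹ * vr)| := by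
  have hnx : (0:ℝ) < ‖x‖ := lt_trans one_pos hx
  have hx0 : x ≠ 0 := norm_ne_zero_iff.mp hnx.ne'
  set d : ℝ := -(‖x‖^2)⁻¹ * vRad m t (‖x‖-1) + ‖x‖⁻¹ * vr with hd
  have hsub : HasDerivAt (fun ρ : ℝ => ρ - 1) 1 ‖x‖ := (hasDerivAt_id _).sub_const 1
  have hv2 : HasDerivAt (fun ρ : ℝ => vRad m t (ρ - 1)) (vr * 1) ‖x‖ :=
    HasDerivAt.comp (h₂ := fun r => vRad m t r) (h := fun ρ : ℝ => ρ - 1) ‖x‖ hvr hsub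
  have hinv : HasDerivAt (fun ρ : ℝ => ρ⁻¹) (-(‖x‖^2)⁻¹) ‖x‖ := hasDerivAt_inv hnx.ne'
  have h1 : HasDerivAt (fun ρ : ℝ => ρ⁻¹ * vRad m t (ρ - 1)) d ‖x‖ := by
    have := hinv.mul hv2
    refine this.congr_deriv ?_
    rw [hd]; ring
  have hN : HasFDerivAt (fun y : EuclideanSpace ℝ (Fin 3) => ‖y‖) (‖x‖⁻¹ • innerSL ℝ x) x :=
    hasFDerivAt_norm' hx0
  have hU : HasFDerivAt (uRad m t) (d • (‖x‖⁻¹ • innerSL ℝ x)) x := by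
    have := h1.comp_hasFDerivAt x hN
    exact this
  have hgrad : gradient (uRad m t) x
      = (InnerProductSpace.toDual ℝ (EuclideanSpace ℝ (Fin 3))).symm
          (d • (‖x‖⁻¹ • innerSL ℝ x)) := by
    rw [gradient, hU.fderiv]
  rw [hgrad, LinearIsometryEquiv.norm_map]
  rw [norm_smul, norm_smul, innerSL_apply_norm]
  rw [Real.norm_eq_abs, Real.norm_eq_abs, abs_of_pos (inv_pos.mpr hnx)]
  rw [inv_mul_cancel₀ hnx.ne', mul_one]

lemma cSmall_pos : 0 < cSmall := by
  have := Real.exp_lt_exp.mpr (by norm_num : (-1:ℝ) < -1/4)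
  unfold cSmall
  linarith

lemma cSmall_le : cSmall ≤ 1/16 := by
  have h1 : Real.exp (-(1:ℝ)/4) ≤ 1 := Real.exp_le_one_iff.mpr (by norm_num)
  have h2 : 0 < Real.exp (-1:ℝ) := Real.exp_pos _
  unfold cSmall
  linarith

lemma grad_lower {m : ℕ} (hm : 2 ≤ m) {x : EuclideanSpace ℝ (Fin 3)}
    (hx1 : 1 < ‖x‖) (hx2 : ‖x‖ ≤ 1 + cSmall) :
    cSmall / m ≤ ‖gradient (uRad m ((m:ℝ)^2)) x‖ := by
  have hm1 : 1 ≤ m := by omega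
  have hmR : (2:ℝ) ≤ m := by exact_mod_cast hm
  have hmpos : (0:ℝ) < m := by linarith
  have ht : (0:ℝ) < (m:ℝ)^2 := by positivity
  set t := ((m:ℝ))^2 with htdef
  set ρ := ‖x‖ with hρdef
  set r := ρ - 1 with hrdef
  have hc0 := cSmall_pos
  have hcle := cSmall_le
  have hr0 : 0 ≤ r := by simp [hrdef]; linarith
  have hr1 : r ≤ 1 := by simp [hrdef]; linarith
  have hrc : r ≤ cSmall := by simp [hrdef]; linarith
  set ct := (4 * Real.pi * t) ^ (-(1 : ℝ) / 2) with hct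
  set D := Ganti t r (2*m) - Ganti t r m with hD
  set I := ∫ s in Set.Ioc (m:ℝ) (2*m), halfLineKernel t r s with hI
  -- derivative of vRad at r
  have hfun : (fun r => vRad m t r)
      = fun r => ct * ∫ s in Set.Ioc (m:ℝ) (2*m), halfLineKernel t r s := by
    funext r; exact vRad_eq hm1 t r
  have hvderiv : HasDerivAt (fun r => vRad m t r) (ct * D) r := by
    rw [hfun]
    exact (hasDerivAt_vInt ht m r).const_mul ct
  have hvr' : HasDerivAt (fun r => vRad m t r) (ct * D) (‖x‖ - 1) := hvderiv
  have hnorm := norm_gradient_uRad hx1 hvr'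
  rw [hnorm]
  -- bounds
  have hctb := ct_bounds (m := m) hm1
  have hIb := vInt_bounds ht hm1 hr0
  have hvval : vRad m t r = ct * I := by rw [vRad_eq hm1 t r]
  have hctpos : 0 < ct := lt_of_lt_of_le (by positivity) hctb.1
  have hv0 : 0 ≤ vRad m t r := by rw [hvval]; exact mul_nonneg hctpos.le hIb.1
  have hI2 : I ≤ 2*r := by
    have := hIb.2
    rw [← hI] at this
    calc I ≤ 2*(m:ℝ)^2*r/t := this
      _ = 2*r := by rw [htdef]; field_simp
  have hvup : vRad m t r ≤ (1/(3*(m:ℝ))) * (2*r) := by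
    rw [hvval]
    apply mul_le_mul hctb.2 hI2 hIb.1 (by positivity)
  have hDlow : 16 * cSmall ≤ D := by
    have := D_lower hm hr0 hr1
    rw [← htdef] at this
    unfold cSmall
    linarith
  have hvrlow : (1/(4*(m:ℝ))) * (16*cSmall) ≤ ct * D :=
    mul_le_mul hctb.1 hDlow (by positivity) hctpos.le
  -- inverse facts
  have hρ2 : ρ ≤ 2 := by linarith
  have hρpos : (0:ℝ) < ρ := by linarith
  have h2inv : (2:ℝ)⁻¹ ≤ ρ⁻¹ := inv_anti₀ hρpos hρ2
  have hsq1 : (1:ℝ) ≤ ρ^2 := by nlinarith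
  have hsqinv : (ρ^2)⁻¹ ≤ 1 := inv_le_one_of_one_le₀ hsq1
  have hterm1 : (2:ℝ)⁻¹ * ((1/(4*(m:ℝ))) * (16*cSmall)) ≤ ρ⁻¹ * (ct * D) :=
    mul_le_mul h2inv hvrlow (by positivity) (by positivity)
  have hterm2 : (ρ^2)⁻¹ * vRad m t r ≤ (1/(3*(m:ℝ))) * (2*cSmall) := by
    calc (ρ^2)⁻¹ * vRad m t r ≤ 1 * vRad m t r :=
          mul_le_mul_of_nonneg_right hsqinv hv0
      _ = vRad m t r := one_mul _
      _ ≤ (1/(3*(m:ℝ))) * (2*r) := hvup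
      _ ≤ (1/(3*(m:ℝ))) * (2*cSmall) := by
          apply mul_le_mul_of_nonneg_left (by linarith) (by positivity)
  have hkey : cSmall / m ≤ -(ρ^2)⁻¹ * vRad m t r + ρ⁻¹ * (ct * D) := by
    have e1 : (2:ℝ)⁻¹ * ((1/(4*(m:ℝ))) * (16*cSmall)) = 2*cSmall/m := by ring
    have e2 : (1/(3*(m:ℝ))) * (2*cSmall) = 2*cSmall/(3*m) := by ring
    have e3 : cSmall/m ≤ 2*cSmall/m - 2*cSmall/(3*m) := by
      have h4 : 2*cSmall/(m:ℝ) - 2*cSmall/(3*(m:ℝ)) - cSmall/(m:ℝ) = cSmall/(3*(m:ℝ)) := by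
        ring
      have h5 : 0 ≤ cSmall/(3*(m:ℝ)) := by positivity
      linarith
    linarith
  calc cSmall / m ≤ -(ρ^2)⁻¹ * vRad m t r + ρ⁻¹ * (ct * D) := hkey
    _ ≤ |(-(ρ^2)⁻¹ * vRad m t r + ρ⁻¹ * (ct * D))| := le_abs_self _


/-- Optimality of the decay rate `t^{-3/(2p)}` of the gradient estimate for the Dirichlet
heat flow on the exterior of the unit ball in `ℝ³` for `3 < p < ∞`: the solutions `u_m`
with initial data `f_m` satisfy `‖∇ u_m(m²)‖_{L^p(Ω)} ≥ C m^{-3/p} ‖f_m‖_{L^p(Ω)}` for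
all large `m`, where `t_m = m²` so that `m^{-3/p} = t_m^{-3/(2p)}`. -/

theorem optimality_gradient_estimate_high_p (p : ℝ≥0∞) (hp3 : 3 < p) (hptop : p < ⊤) :
    ∃ C : ℝ, 0 < C ∧ ∃ M : ℕ, 1 ≤ M ∧ ∀ m : ℕ, M ≤ m →
      ENNReal.ofReal (C * (m : ℝ) ^ (-(3 : ℝ) / p.toReal)) *
          eLpNorm (fData m) p (volume.restrict extBall)
        ≤ eLpNorm (fun x => ‖gradient (uRad m ((m : ℝ) ^ 2)) x‖) p
            (volume.restrict extBall) := by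
  classical
  set E := EuclideanSpace ℝ (Fin 3)
  have hp0 : p ≠ 0 := by intro h; rw [h] at hp3; exact (not_lt.mpr bot_le) hp3
  have hpt : p ≠ ⊤ := hptop.ne
  set q : ℝ := p.toReal with hq
  have hq3 : (3:ℝ) < q := by
    have := (ENNReal.toReal_lt_toReal (by norm_num : (3:ℝ≥0∞) ≠ ⊤) hpt).mpr hp3
    simpa using this
  have hq0 : 0 < q := by linarith
  have hc0 := cSmall_pos
  have hcle := cSmall_le
  -- the annulus
  set A : Set E := Metric.ball (0:E) (1+cSmall) \ Metric.closedBall (0:E) 1 with hA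
  have hAmeas : MeasurableSet A :=
    measurableSet_ball.diff measurableSet_closedBall
  have hAmem : ∀ x : E, x ∈ A ↔ 1 < ‖x‖ ∧ ‖x‖ < 1 + cSmall := by
    intro x
    simp [hA, Metric.mem_ball, Metric.mem_closedBall, dist_zero_right, and_comm]
  have hAsub : A ⊆ extBall := fun x hx => ((hAmem x).mp hx).1
  set V : ℝ≥0∞ := volume A with hV
  have hVpos : 0 < V := by
    have hball : Metric.ball ((1 + cSmall/2) • (EuclideanSpace.single (0:Fin 3) (1:ℝ)))
        (cSmall/4) ⊆ A := by
      intro y hy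
      rw [hAmem]
      have hxnorm : ‖(1 + cSmall/2) • (EuclideanSpace.single (0:Fin 3) (1:ℝ))‖
          = 1 + cSmall/2 := by
        rw [norm_smul, EuclideanSpace.norm_single]
        rw [Real.norm_eq_abs, abs_of_pos (by linarith)]
        norm_num
      have hdist := mem_ball_iff_norm.mp hy
      have htri := abs_norm_sub_norm_le y ((1 + cSmall/2) • (EuclideanSpace.single (0:Fin 3) (1:ℝ)))
      rw [hxnorm] at htri
      have := abs_le.mp (le_of_lt (lt_of_le_of_lt htri hdist))
      constructor <;> [linarith [this.1]; linarith [this.2]]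
    calc (0:ℝ≥0∞) < volume (Metric.ball ((1 + cSmall/2) • (EuclideanSpace.single (0:Fin 3) (1:ℝ))) (cSmall/4)) :=
          Metric.measure_ball_pos volume _ (by linarith)
      _ ≤ V := measure_mono hball
  have hVtop : V < ⊤ :=
    lt_of_le_of_lt (measure_mono (Set.diff_subset)) (measure_ball_lt_top)
  set B₁ : ℝ≥0∞ := volume (Metric.ball (0:E) 1) with hB₁
  have hBpos : 0 < B₁ := Metric.measure_ball_pos volume _ one_pos
  have hBtop : B₁ < ⊤ := measure_ball_lt_top
  have hVt0 : 0 < V.toReal := ENNReal.toReal_pos hVpos.ne' hVtop.ne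
  have hBt0 : 0 < B₁.toReal := ENNReal.toReal_pos hBpos.ne' hBtop.ne
  set W : ℝ := (V.toReal / B₁.toReal) ^ (1/q) with hW
  have hWpos : 0 < W := Real.rpow_pos_of_pos (by positivity) _
  refine ⟨cSmall * (27:ℝ) ^ (-(1:ℝ)/q) * W, by positivity, 2, by norm_num, fun m hm => ?_⟩
  set C : ℝ := cSmall * (27:ℝ) ^ (-(1:ℝ)/q) * W with hC
  have hm1 : 1 ≤ m := by omega
  have hmpos : (0:ℝ) < m := by exact_mod_cast Nat.pos_of_ne_zero (by omega)
  have hm1R : (1:ℝ) ≤ m := by exact_mod_cast hm1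
  set μ := volume.restrict extBall with hμ
  -- Step 1: lower bound for the RHS
  have hRHS : ENNReal.ofReal (cSmall/m) * V ^ (1/q)
      ≤ eLpNorm (fun x => ‖gradient (uRad m ((m : ℝ) ^ 2)) x‖) p μ := by
    have hmono : eLpNorm (A.indicator (fun _ => cSmall/m)) p μ
        ≤ eLpNorm (fun x => ‖gradient (uRad m ((m : ℝ) ^ 2)) x‖) p μ := by
      apply eLpNorm_mono
      intro x
      by_cases hx : x ∈ A
      · rw [Set.indicator_of_mem hx]
        rw [Real.norm_eq_abs, Real.norm_eq_abs, abs_of_pos (by positivity : (0:ℝ) < cSmall/m)]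
        rw [abs_of_nonneg (norm_nonneg _)]
        exact grad_lower hm ((hAmem x).mp hx).1 (le_of_lt ((hAmem x).mp hx).2)
      · rw [Set.indicator_of_notMem hx]
        simp
    have hind : eLpNorm (A.indicator (fun _ => cSmall/m)) p μ
        = ENNReal.ofReal (cSmall/m) * V ^ (1/q) := by
      rw [eLpNorm_indicator_const hAmeas hp0 hpt]
      congr 1
      · rw [← ofReal_norm, Real.norm_eq_abs,
          abs_of_pos (by positivity : (0:ℝ) < cSmall/m)]
      · rw [hμ, Measure.restrict_apply hAmeas, Set.inter_eq_left.mpr hAsub]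
    rw [← hind]
    exact hmono
  -- Step 2: upper bound for the LHS eLpNorm
  have hLHS : eLpNorm (fData m) p μ
      ≤ ENNReal.ofReal (1/m) * (ENNReal.ofReal ((3*(m:ℝ))^3) * B₁) ^ (1/q) := by
    have hmono : eLpNorm (fData m) p μ
        ≤ eLpNorm ((Metric.closedBall (0:E) (3*m)).indicator (fun _ => (1:ℝ)/m)) p μ := by
      apply eLpNorm_mono
      intro x
      unfold fData
      by_cases hx : (m : ℝ) + 1 < ‖x‖ ∧ ‖x‖ ≤ 2 * m + 1
      · rw [if_pos hx]
        have hxball : x ∈ Metric.closedBall (0:E) (3*m) := by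
          rw [Metric.mem_closedBall, dist_zero_right]
          linarith [hx.2, hm1R]
        rw [Set.indicator_of_mem hxball]
        rw [Real.norm_eq_abs, Real.norm_eq_abs]
        rw [abs_of_nonneg (by positivity : (0:ℝ) ≤ ‖x‖⁻¹),
          abs_of_pos (by positivity : (0:ℝ) < 1/(m:ℝ))]
        rw [inv_le_comm₀ (by linarith [hx.1] : (0:ℝ) < ‖x‖) (by positivity)]
        rw [one_div, inv_inv]
        linarith [hx.1]
      · rw [if_neg hx]
        simp
    have hind : eLpNorm ((Metric.closedBall (0:E) (3*m)).indicator (fun _ => (1:ℝ)/m)) p μ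
        = ENNReal.ofReal (1/(m:ℝ)) * (μ (Metric.closedBall (0:E) (3*m))) ^ (1/q) := by
      rw [eLpNorm_indicator_const measurableSet_closedBall hp0 hpt]
      congr 1
      rw [← ofReal_norm, Real.norm_eq_abs,
        abs_of_pos (by positivity : (0:ℝ) < 1/(m:ℝ))]
    have hμcb : μ (Metric.closedBall (0:E) (3*m)) ≤ ENNReal.ofReal ((3*(m:ℝ))^3) * B₁ := by
      calc μ (Metric.closedBall (0:E) (3*m)) ≤ volume (Metric.closedBall (0:E) (3*m)) :=
            Measure.restrict_apply_le _ _
        _ = ENNReal.ofReal ((3*(m:ℝ)) ^ Module.finrank ℝ E) * volume (Metric.ball (0:E) 1) :=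
            Measure.addHaar_closedBall volume _ (by positivity)
        _ = ENNReal.ofReal ((3*(m:ℝ))^3) * B₁ := by
            have h3 : Module.finrank ℝ E = 3 := by
              simp [E, finrank_euclideanSpace]
            rw [h3]
    calc eLpNorm (fData m) p μ
        ≤ ENNReal.ofReal (1/(m:ℝ)) * (μ (Metric.closedBall (0:E) (3*m))) ^ (1/q) :=
          hmono.trans_eq hind
      _ ≤ ENNReal.ofReal (1/(m:ℝ)) * (ENNReal.ofReal ((3*(m:ℝ))^3) * B₁) ^ (1/q) := by
          exact mul_le_mul_right (ENNReal.rpow_le_rpow hμcb (by positivity)) _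
  -- Step 3: the real-number computation
  have hreal : C * (m:ℝ) ^ (-(3:ℝ)/q) * (1/(m:ℝ)) * ((3*(m:ℝ))^3) ^ (1/q)
      = (cSmall/m) * W := by
    have h27 : ((3*(m:ℝ))^3) ^ (1/q) = (27:ℝ)^(1/q) * ((m:ℝ)^3)^(1/q) := by
      rw [← Real.mul_rpow (by norm_num) (by positivity)]
      norm_num
      ring_nf
    have hm3 : ((m:ℝ)^3)^(1/q) = (m:ℝ)^((3:ℝ)/q) := by
      rw [← Real.rpow_natCast (m:ℝ) 3, ← Real.rpow_mul hmpos.le]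
      congr 1
      push_cast
      ring
    have hmm : (m:ℝ)^(-(3:ℝ)/q) * (m:ℝ)^((3:ℝ)/q) = 1 := by
      rw [← Real.rpow_add hmpos, neg_div, neg_add_cancel, Real.rpow_zero]
    have h27' : (27:ℝ)^(-(1:ℝ)/q) * (27:ℝ)^((1:ℝ)/q) = 1 := by
      rw [← Real.rpow_add (by norm_num : (0:ℝ) < 27), neg_div, one_div,
        neg_add_cancel, Real.rpow_zero]
    rw [hC, h27, hm3]
    calc cSmall * (27:ℝ) ^ (-(1:ℝ)/q) * W * (m:ℝ) ^ (-(3:ℝ)/q) * (1/(m:ℝ))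
          * ((27:ℝ)^(1/q) * (m:ℝ)^((3:ℝ)/q))
        = (cSmall * W * (1/(m:ℝ))) * (((27:ℝ)^(-(1:ℝ)/q) * (27:ℝ)^((1:ℝ)/q))
            * ((m:ℝ)^(-(3:ℝ)/q) * (m:ℝ)^((3:ℝ)/q))) := by ring
      _ = (cSmall/m) * W := by rw [hmm, h27']; ring
  -- Step 4: ENNReal computation  ofReal W * B₁^(1/q) = V^(1/q)
  have hWB : ENNReal.ofReal W * B₁ ^ (1/q) = V ^ (1/q) := by
    rw [hW, ← ENNReal.ofReal_rpow_of_pos (by positivity)]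
    rw [← ENNReal.mul_rpow_of_nonneg _ _ (by positivity : (0:ℝ) ≤ 1/q)]
    congr 1
    rw [← ENNReal.ofReal_toReal hBtop.ne, ← ENNReal.ofReal_mul (by positivity)]
    rw [ENNReal.ofReal_toReal hBtop.ne]
    rw [div_mul_cancel₀ _ hBt0.ne']
    exact ENNReal.ofReal_toReal hVtop.ne
  -- Put everything together
  calc ENNReal.ofReal (C * (m : ℝ) ^ (-(3 : ℝ) / q)) * eLpNorm (fData m) p μ
      ≤ ENNReal.ofReal (C * (m : ℝ) ^ (-(3 : ℝ) / q)) *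
          (ENNReal.ofReal (1/(m:ℝ)) * (ENNReal.ofReal ((3*(m:ℝ))^3) * B₁) ^ (1/q)) :=
        mul_le_mul_right hLHS _
    _ = ENNReal.ofReal (cSmall/m) * (ENNReal.ofReal W * B₁ ^ (1/q)) := by
        rw [ENNReal.mul_rpow_of_nonneg _ _ (by positivity : (0:ℝ) ≤ 1/q)]
        rw [ENNReal.ofReal_rpow_of_pos (by positivity : (0:ℝ) < (3*(m:ℝ))^3)]
        rw [← mul_assoc, ← mul_assoc, ← ENNReal.ofReal_mul (by positivity),
          ← ENNReal.ofReal_mul (by positivity)]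
        rw [hreal]
        rw [ENNReal.ofReal_mul (by positivity : (0:ℝ) ≤ cSmall/(m:ℝ))]
        rw [mul_assoc]
    _ = ENNReal.ofReal (cSmall/m) * V ^ (1/q) := by rw [hWB]
    _ ≤ _ := hRHS
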